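/- Fix an integer m ≥ 2 and let Y ∈ ℚ⟦X⟧ be the formal power series Y := 1 + ∑_{n≥1} (1/n)·C(mn, n−1)·(−1)ⁿ·Xⁿ, which satisfies 1 − Y − X·Y^m = 0. Then X·Y′ = Y · ∑_{n≥1} C(mn − 1, n − 1)·(−1)ⁿ·Xⁿ in ℚ⟦X⟧; equivalently X·Y′/Y = ∑_{n≥1} C(mn − 1, n − 1)·(−X)ⁿ. -/

import Mathlib

open PowerSeries

theorem twist_knot_top_log_derivative (m : ℕ) (hm : 2 ≤ m)
    (Y : PowerSeries ℚ)
    (hY : Y = PowerSeries.mk fun n => if n = 0 then 1 else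
      (1 / (n : ℚ)) * (Nat.choose (m * n) (n - 1) : ℚ) * (-1) ^ n)
    (heq : 1 - Y - PowerSeries.X * Y ^ m = 0) :
    PowerSeries.X * PowerSeries.derivative ℚ Y =
      Y * PowerSeries.mk (fun n => if n = 0 then 0 else
        (Nat.choose (m * n - 1) (n - 1) : ℚ) * (-1) ^ n) := by
  set D := PowerSeries.derivative ℚ Y with hD
  set S : PowerSeries ℚ := PowerSeries.mk (fun n => if n = 0 then 0 else
        (Nat.choose (m * n - 1) (n - 1) : ℚ) * (-1) ^ n) with hS
  set g : PowerSeries ℚ := PowerSeries.C (m : ℚ) with hg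
  -- combinatorial identity
  have key1 : g * S = (g - 1) * (PowerSeries.X * D) + (Y - 1) := by
    ext n
    rcases n with _ | k
    · simp [hS, hY, hg]
    · have hq : ((Nat.choose (m*(k+1) - 1) k : ℚ)) * (m*(k+1)) =
          ((Nat.choose (m*(k+1)) k : ℚ)) * ((m:ℚ)*(k+1) - k) := by
        have h1 : m*(k+1) - 1 + 1 = m*(k+1) := by
          have : 1 ≤ m*(k+1) := Nat.one_le_iff_ne_zero.mpr (by positivity)
          omega
        have h2 := Nat.choose_mul_succ_eq (m*(k+1)-1) k
        rw [h1] at h2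
        have hk : k ≤ m*(k+1) := by nlinarith
        have := congrArg (Nat.cast (R := ℚ)) h2
        push_cast [Nat.cast_sub hk] at this
        convert this using 2
      have hk1 : ((k:ℚ)+1) ≠ 0 := by positivity
      simp only [hg, hS, hY, hD, map_mul, map_sub, map_add, map_one,
        PowerSeries.coeff_C_mul, PowerSeries.coeff_mk, PowerSeries.coeff_succ_X_mul,
        PowerSeries.coeff_derivative, PowerSeries.coeff_one, sub_mul, one_mul,
        Nat.succ_ne_zero, if_false, Nat.succ_sub_one]
      field_simp
      ring_nf
      ring_nf at hq
      linear_combination (norm := (push_cast; ring)) ((-1:ℚ))^(k+1) * hq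
  -- derivative of the defining equation
  have hd := congrArg (PowerSeries.derivative ℚ) heq
  simp only [map_sub, map_zero, map_one, Derivation.leibniz, Derivation.leibniz_pow,
    PowerSeries.derivative_X, smul_eq_mul, mul_one, nsmul_eq_mul, ← hD] at hd
  rw [Derivation.map_one_eq_zero, zero_sub, ← map_natCast (PowerSeries.C (R := ℚ)) m, ← hg] at hd
  have h3 : Y ^ m = Y ^ (m - 1) * Y := by
    rw [pow_sub_one_mul (by omega : m ≠ 0)]
  have hm0 : g ≠ 0 := by
    intro h
    have := congrArg (PowerSeries.coeff 0) h
    simp [hg] at this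
    omega
  apply mul_left_cancel₀ hm0
  linear_combination (-Y) * key1 + (-(PowerSeries.X*Y)) * hd
    + (g*PowerSeries.X*D + Y) * heq + (g*PowerSeries.X*PowerSeries.X*D) * h3
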